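/- arXiv:2006.05755 — 16 statements merged into one kernel-verified Lean document; each statement's English description precedes it below -/
import Mathlib

section
/- Let R be an integral domain, let m ≥ 2, let p_1, …, p_m be prime ideals of R, and let a_1, …, a_m be elements of R such that a_i ∈ p_i and a_i ∉ p_j whenever j ≠ i. Then for all positive integers k_1, …, k_m and every index i ∈ {1, …, m}, the product a_1^{k_1}···a_m^{k_m} lies in the principal ideal ⟨a_i^{k_i}⟩ but does not lie in the principal ideal ⟨a_i^{k_i+1}⟩. -/
theorem stmt1 {R : Type*} [CommRing R] [IsDomain R] {m : ℕ} (hm : 2 ≤ m)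
    (p : Fin m → Ideal R) (hp : ∀ i, (p i).IsPrime)
    (a : Fin m → R) (ha : ∀ i, a i ∈ p i) (ha' : ∀ i j, j ≠ i → a i ∉ p j)
    (k : Fin m → ℕ) (hk : ∀ i, 1 ≤ k i) (i : Fin m) :
    (∏ j, a j ^ k j) ∈ Ideal.span {a i ^ k i} ∧
      (∏ j, a j ^ k j) ∉ Ideal.span {a i ^ (k i + 1)} := by
  -- pick j₀ ≠ i
  haveI : Nontrivial (Fin m) := Fin.nontrivial_iff_two_le.mpr hm
  obtain ⟨j₀, hj₀⟩ := exists_ne i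
  have hane : a i ≠ 0 := fun h => ha' i j₀ hj₀ (h ▸ (p j₀).zero_mem)
  have hsplit : (∏ j, a j ^ k j) =
      a i ^ k i * ∏ j ∈ Finset.univ.erase i, a j ^ k j :=
    (Finset.mul_prod_erase Finset.univ (fun j => a j ^ k j) (Finset.mem_univ i)).symm
  constructor
  · rw [Ideal.mem_span_singleton]
    exact ⟨_, hsplit⟩
  · rw [Ideal.mem_span_singleton]
    rintro ⟨r, hr⟩
    rw [hsplit, pow_succ, mul_assoc] at hr
    have hcancel := mul_left_cancel₀ (pow_ne_zero (k i) hane) hr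
    have hmem : (∏ j ∈ Finset.univ.erase i, a j ^ k j) ∈ p i := by
      rw [hcancel]
      exact (p i).mul_mem_right r (ha i)
    haveI := hp i
    obtain ⟨j, hj, hjmem⟩ := Ideal.IsPrime.prod_mem_iff.mp hmem
    have hji : j ≠ i := (Finset.mem_erase.mp hj).1
    have : a j ∈ p i := ((hp i).pow_mem_iff_mem _ (hk j)).mp hjmem
    exact ha' j i hji.symm this
end

section
/- Let R be a nontrivial commutative ring whose prime ideals are linearly ordered by inclusion. Then every proper radical ideal of R is a prime ideal. -/
theorem stmt2 {R : Type*} [CommRing R] [Nontrivial R]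
    (h : ∀ p q : Ideal R, p.IsPrime → q.IsPrime → p ≤ q ∨ q ≤ p)
    (I : Ideal R) (hI : I ≠ ⊤) (hrad : I.radical = I) : I.IsPrime := by
  constructor
  · exact hI
  · intro x y hxy
    by_contra hc
    push_neg at hc
    obtain ⟨hx, hy⟩ := hc
    rw [← hrad, Ideal.radical_eq_sInf, Ideal.mem_sInf] at hx hy
    push_neg at hx hy
    obtain ⟨p, ⟨hIp, hp⟩, hxp⟩ := hx
    obtain ⟨q, ⟨hIq, hq⟩, hyq⟩ := hy
    rcases h p q hp hq with hpq | hqp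
    · rcases hp.mem_or_mem (hIp hxy) with h1 | h1
      · exact hxp h1
      · exact hyq (hpq h1)
    · rcases hq.mem_or_mem (hIq hxy) with h1 | h1
      · exact hxp (hqp h1)
      · exact hyq h1
end

section
/- Let R be a commutative ring whose prime ideals are linearly ordered by inclusion. Then for all a, b ∈ R there exists n ∈ ℕ such that a^n ∈ ⟨b⟩ or b^n ∈ ⟨a⟩. -/
theorem stmt3 {R : Type*} [CommRing R]
    (h : ∀ p q : Ideal R, p.IsPrime → q.IsPrime → p ≤ q ∨ q ≤ p)
    (a b : R) :
    ∃ n : ℕ, a ^ n ∈ Ideal.span {b} ∨ b ^ n ∈ Ideal.span {a} := by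
  by_contra hc
  push_neg at hc
  have ha : a ∉ (Ideal.span {b}).radical := by
    rw [Ideal.mem_radical_iff]
    rintro ⟨n, hn⟩
    exact (hc n).1 hn
  have hb : b ∉ (Ideal.span {a}).radical := by
    rw [Ideal.mem_radical_iff]
    rintro ⟨n, hn⟩
    exact (hc n).2 hn
  rw [Ideal.radical_eq_sInf, Ideal.mem_sInf] at ha hb
  push_neg at ha hb
  obtain ⟨p, ⟨hpb, hpP⟩, hap⟩ := ha
  obtain ⟨q, ⟨hqa, hqP⟩, hbq⟩ := hb
  rcases h p q hpP hqP with hle | hle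
  · exact hbq (hle (hpb (Ideal.mem_span_singleton_self b)))
  · exact hap (hle (hqa (Ideal.mem_span_singleton_self a)))
end

section
/- Let R be a local commutative ring with maximal ideal M, and let r be a radical ideal of R with r strictly contained in M. Then the quotient of additive groups M/r is infinite; indeed, for any b ∈ M \ r, the powers b^n (n ∈ ℕ, n ≥ 1) are pairwise incongruent modulo r. -/
private lemma key_aux {R : Type*} [CommRing R] [IsLocalRing R]
    (r : Ideal R) (hrad : r.radical = r)
    {b : R} (hbM : b ∈ IsLocalRing.maximalIdeal R) (hbr : b ∉ r)
    {m n : ℕ} (hm : 1 ≤ m) (hmn : m < n) : b ^ m - b ^ n ∉ r := by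
  intro h
  have hpow : b ^ (n - m) ∈ IsLocalRing.maximalIdeal R := by
    have : n - m ≠ 0 := by omega
    exact Ideal.pow_mem_of_mem _ hbM _ (Nat.pos_of_ne_zero this)
  have hu : IsUnit (1 - b ^ (n - m)) :=
    IsLocalRing.isUnit_one_sub_self_of_mem_nonunits _ hpow
  have heq : b ^ m - b ^ n = b ^ m * (1 - b ^ (n - m)) := by
    have : b ^ m * b ^ (n - m) = b ^ n := by
      rw [← pow_add]; congr 1; omega
    rw [mul_sub, mul_one, this]
  obtain ⟨u, hu⟩ := hu
  have hbm : b ^ m ∈ r := by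
    have h2 : b ^ m * (1 - b ^ (n - m)) ∈ r := heq ▸ h
    have : b ^ m * (1 - b ^ (n - m)) * ↑u⁻¹ ∈ r := Ideal.mul_mem_right _ _ h2
    rwa [← hu, mul_assoc, u.mul_inv, mul_one] at this
  have : b ∈ r.radical := ⟨m, hbm⟩
  rw [hrad] at this
  exact hbr this

theorem stmt4 {R : Type*} [CommRing R] [IsLocalRing R]
    (r : Ideal R) (hrad : r.radical = r) (hr : r < IsLocalRing.maximalIdeal R) :
    (∀ b ∈ IsLocalRing.maximalIdeal R, b ∉ r →
      ∀ m n : ℕ, 1 ≤ m → 1 ≤ n → m ≠ n → b ^ m - b ^ n ∉ r) ∧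
    Infinite ((IsLocalRing.maximalIdeal R).toAddSubgroup ⧸
      (r.toAddSubgroup.addSubgroupOf (IsLocalRing.maximalIdeal R).toAddSubgroup)) := by
  have key : ∀ b ∈ IsLocalRing.maximalIdeal R, b ∉ r →
      ∀ m n : ℕ, 1 ≤ m → 1 ≤ n → m ≠ n → b ^ m - b ^ n ∉ r := by
    intro b hbM hbr m n hm hn hmn
    rcases lt_or_gt_of_ne hmn with h | h
    · exact key_aux r hrad hbM hbr hm h
    · intro hmem
      exact key_aux r hrad hbM hbr hn h (by simpa using (neg_mem hmem : -(b^m - b^n) ∈ r))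
  refine ⟨key, ?_⟩
  obtain ⟨b, hbM, hbr⟩ := SetLike.exists_of_lt hr
  refine Infinite.of_injective
    (fun k : ℕ => QuotientAddGroup.mk
      (⟨b ^ (k + 1), Ideal.pow_mem_of_mem _ hbM _ (Nat.succ_pos k)⟩ :
        (IsLocalRing.maximalIdeal R).toAddSubgroup)) ?_
  intro i j hij
  by_contra hne
  rw [QuotientAddGroup.eq] at hij
  rw [AddSubgroup.mem_addSubgroupOf] at hij
  have : b ^ (j + 1) - b ^ (i + 1) ∈ r := by
    simpa [sub_eq_neg_add] using hij
  exact key b hbM hbr (j + 1) (i + 1) (Nat.succ_le_succ (Nat.zero_le _))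
    (Nat.succ_le_succ (Nat.zero_le _)) (by omega) this
end

section
/- Let R be a local integral domain with fraction field K, and let O be a valuation subring of K. Identify R with its image in K. Then the additive group R/(O ∩ R) is finite if and only if R ⊆ O. -/
theorem stmt5 {R : Type*} [CommRing R] [IsDomain R] [IsLocalRing R]
    (O : ValuationSubring (FractionRing R)) :
    Finite (R ⧸ (O.toSubring.comap (algebraMap R (FractionRing R))).toAddSubgroup) ↔
      ∀ r : R, algebraMap R (FractionRing R) r ∈ O := by
  constructor
  · intro hfin
    by_contra h
    push_neg at h
    obtain ⟨r, hr⟩ := h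
    set v := O.valuation
    have hv : 1 < v (algebraMap R (FractionRing R) r) := by
      by_contra hle
      exact hr (O.mem_of_valuation_le_one _ (le_of_not_gt hle))
    have main : ∀ i j : ℕ, j < i →
        (QuotientAddGroup.mk (s := (O.toSubring.comap (algebraMap R (FractionRing R))).toAddSubgroup) (r ^ i) =
         QuotientAddGroup.mk (r ^ j)) → False := by
      intro i j hlt hij
      have hmem : r ^ i - r ^ j ∈ (O.toSubring.comap (algebraMap R (FractionRing R))).toAddSubgroup := by
        rwa [← QuotientAddGroup.eq_iff_sub_mem]
      have hmem' : algebraMap R (FractionRing R) (r ^ i - r ^ j) ∈ O := hmem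
      have hvlt : v (algebraMap R (FractionRing R) (r ^ j)) <
          v (algebraMap R (FractionRing R) (r ^ i)) := by
        rw [map_pow, map_pow, map_pow, map_pow]
        exact pow_lt_pow_right₀ hv hlt
      have heq : v (algebraMap R (FractionRing R) (r ^ i - r ^ j)) =
          v (algebraMap R (FractionRing R) (r ^ i)) := by
        rw [map_sub]
        exact Valuation.map_sub_eq_of_lt_left _ hvlt
      have h1 : 1 < v (algebraMap R (FractionRing R) (r ^ i - r ^ j)) := by
        rw [heq, map_pow, map_pow]
        exact one_lt_pow₀ hv (Nat.zero_lt_of_lt hlt).ne'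
      exact absurd (O.valuation_le_one ⟨_, hmem'⟩) (not_le_of_gt h1)
    have key : Function.Injective
        (fun n : ℕ => QuotientAddGroup.mk (s := (O.toSubring.comap (algebraMap R (FractionRing R))).toAddSubgroup) (r ^ n)) := by
      intro i j hij
      rcases lt_trichotomy i j with hlt | heq | hlt
      · exact absurd hij.symm (fun hh => main j i hlt hh)
      · exact heq
      · exact absurd hij (fun hh => main i j hlt hh)
    haveI := Infinite.of_injective _ key
    exact not_finite (R ⧸ (O.toSubring.comap (algebraMap R (FractionRing R))).toAddSubgroup)
  · intro h
    have htop : (O.toSubring.comap (algebraMap R (FractionRing R))).toAddSubgroup = ⊤ := by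
      ext x; simpa using h x
    rw [htop]
    haveI := QuotientAddGroup.subsingleton_quotient_top (G := R)
    exact Finite.of_subsingleton
end

section
/- Let R be a local integral domain with fraction field K, and let O be a valuation subring of K; identify R with its image in K. If the additive group O/(R ∩ O) is finite, then the subring R[O] of K generated by R and O satisfies: (1) R[O] is a valuation subring of K; (2) R[O] is the integral closure of R in K; (3) R[O] is a finitely generated R-module. -/
open Polynomial in
/-- If `x` is integral over `R` and `x⁻¹` lies in a subalgebra `A` of a field `K`,
then `x ∈ A`. -/
theorem aux_mem_of_inv_mem {R K : Type*} [CommRing R] [Field K] [Algebra R K]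
    (A : Subalgebra R K) {x : K} (hx : IsIntegral R x) (hinv : x⁻¹ ∈ A) : x ∈ A := by
  rcases eq_or_ne x 0 with rfl | h0
  · exact A.zero_mem
  obtain ⟨p, hm, hp⟩ := hx
  set n := p.natDegree with hn
  have hn1 : 1 ≤ n := by
    rcases Nat.eq_zero_or_pos n with h | h
    · rw [hm.natDegree_eq_zero.mp h] at hp
      simp at hp
    · exact h
  rw [hm.as_sum, eval₂_add, eval₂_pow, eval₂_X, eval₂_finset_sum] at hp
  simp only [eval₂_mul, eval₂_C, eval₂_pow, eval₂_X] at hp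
  have hxn : x ^ n = -∑ i ∈ Finset.range n, algebraMap R K (p.coeff i) * x ^ i :=
    eq_neg_of_add_eq_zero_left hp
  have h1 : x = x ^ n * x⁻¹ ^ (n - 1) := by
    have h2 : x ^ n = x * x ^ (n - 1) := by
      conv_lhs => rw [show n = (n - 1) + 1 from (Nat.succ_pred_eq_of_pos hn1).symm]
      ring
    rw [h2, mul_assoc, ← mul_pow, mul_inv_cancel₀ h0, one_pow, mul_one]
  have key : x = -∑ i ∈ Finset.range n, algebraMap R K (p.coeff i) * x⁻¹ ^ (n - 1 - i) := by
    calc x = x ^ n * x⁻¹ ^ (n - 1) := h1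
      _ = (-∑ i ∈ Finset.range n, algebraMap R K (p.coeff i) * x ^ i) * x⁻¹ ^ (n - 1) := by
          rw [hxn]
      _ = -∑ i ∈ Finset.range n, algebraMap R K (p.coeff i) * x ^ i * x⁻¹ ^ (n - 1) := by
          rw [neg_mul, Finset.sum_mul]
      _ = -∑ i ∈ Finset.range n, algebraMap R K (p.coeff i) * x⁻¹ ^ (n - 1 - i) := by
          refine congrArg Neg.neg (Finset.sum_congr rfl fun i hi => ?_)
          have hi' : i ≤ n - 1 := Nat.le_pred_of_lt (Finset.mem_range.mp hi)
          have h3 : x ^ i * x⁻¹ ^ i = 1 := by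
            rw [← mul_pow, mul_inv_cancel₀ h0, one_pow]
          have h4 : x ^ i * x⁻¹ ^ (n - 1) = x⁻¹ ^ (n - 1 - i) :=
            calc x ^ i * x⁻¹ ^ (n - 1) = x ^ i * (x⁻¹ ^ i * x⁻¹ ^ (n - 1 - i)) := by
                  rw [← pow_add, Nat.add_sub_cancel' hi']
              _ = x ^ i * x⁻¹ ^ i * x⁻¹ ^ (n - 1 - i) := by ring
              _ = x⁻¹ ^ (n - 1 - i) := by rw [h3, one_mul]
          rw [mul_assoc, h4]
  rw [key]
  exact A.neg_mem (Subalgebra.sum_mem _ fun i _ =>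
    A.mul_mem (A.algebraMap_mem _) (A.pow_mem hinv _))

set_option synthInstance.maxHeartbeats 1000000 in
theorem stmt6 {R : Type*} [CommRing R] [IsDomain R] [IsLocalRing R]
    (O : ValuationSubring (FractionRing R))
    (hfin : Finite (O.toSubring.toAddSubgroup ⧸
      (((algebraMap R (FractionRing R)).range.toAddSubgroup).addSubgroupOf
        O.toSubring.toAddSubgroup))) :
    (∃ V : ValuationSubring (FractionRing R),
        V.toSubring = (Algebra.adjoin R (O : Set (FractionRing R))).toSubring) ∧
      Algebra.adjoin R (O : Set (FractionRing R)) = integralClosure R (FractionRing R) ∧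
      Module.Finite R (Algebra.adjoin R (O : Set (FractionRing R))) := by
  set K := FractionRing R
  set A := Algebra.adjoin R (O : Set K) with hA
  have hOA : (O : Set K) ⊆ A := Algebra.subset_adjoin
  set S : Set K :=
    Set.range fun q : O.toSubring.toAddSubgroup ⧸
        (((algebraMap R K).range.toAddSubgroup).addSubgroupOf O.toSubring.toAddSubgroup) =>
      ((Quotient.out q : O.toSubring.toAddSubgroup) : K) with hS
  have hSfin : S.Finite := Set.finite_range _
  have hSO : S ⊆ (O : Set K) := by
    rintro _ ⟨q, rfl⟩
    exact (Quotient.out q).2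
  set M := Submodule.span R (insert (1 : K) S) with hM
  have hmem : ∀ x ∈ O, x ∈ M := by
    intro x hx
    set xg : O.toSubring.toAddSubgroup := ⟨x, hx⟩ with hxg
    set q : O.toSubring.toAddSubgroup ⧸
        (((algebraMap R K).range.toAddSubgroup).addSubgroupOf O.toSubring.toAddSubgroup) :=
      QuotientAddGroup.mk xg with hq
    have hout : (QuotientAddGroup.mk (Quotient.out q) :
        O.toSubring.toAddSubgroup ⧸
          (((algebraMap R K).range.toAddSubgroup).addSubgroupOf O.toSubring.toAddSubgroup))
        = QuotientAddGroup.mk xg := Quotient.out_eq q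
    have h2 : -(Quotient.out q) + xg ∈
        ((algebraMap R K).range.toAddSubgroup).addSubgroupOf O.toSubring.toAddSubgroup :=
      (QuotientAddGroup.eq).mp hout
    rw [AddSubgroup.mem_addSubgroupOf] at h2
    obtain ⟨r, hr⟩ := h2
    have hcoe : ((-(Quotient.out q) + xg : O.toSubring.toAddSubgroup) : K)
        = -((Quotient.out q : O.toSubring.toAddSubgroup) : K) + x := rfl
    rw [hcoe] at hr
    have hxeq : x = algebraMap R K r + ((Quotient.out q : O.toSubring.toAddSubgroup) : K) := by
      linear_combination -hr
    rw [hxeq, Algebra.algebraMap_eq_smul_one]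
    exact M.add_mem (M.smul_mem r (Submodule.subset_span (Set.mem_insert _ _)))
      (Submodule.subset_span (Set.mem_insert_of_mem _ ⟨q, rfl⟩))
  have hone : (1 : K) ∈ M := Submodule.subset_span (Set.mem_insert _ _)
  have hmul : ∀ x y : K, x ∈ M → y ∈ M → x * y ∈ M := by
    have hMM : M * M ≤ M := by
      rw [hM, Submodule.span_mul_span]
      refine Submodule.span_le.mpr ?_
      rintro _ ⟨a, ha, b, hb, rfl⟩
      rcases ha with rfl | ha
      · simpa using Submodule.subset_span hb
      rcases hb with rfl | hb
      · simpa using Submodule.subset_span (Set.mem_insert_of_mem _ ha)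
      · simpa using hmem _ (O.toSubring.mul_mem (hSO ha) (hSO hb))
    exact fun x y hx hy => hMM (Submodule.mul_mem_mul hx hy)
  set A' : Subalgebra R K := M.toSubalgebra hone hmul with hA'
  have hle : A ≤ A' := Algebra.adjoin_le fun x hx => hmem x hx
  have hge : A' ≤ A := by
    intro x hx
    have hx' : x ∈ Subalgebra.toSubmodule A := by
      refine Submodule.span_le.mpr ?_ hx
      rintro y (rfl | hy)
      · exact A.one_mem
      · exact hOA (hSO hy)
    exact hx'
  have hAA' : A = A' := le_antisymm hle hge
  have hfg : (Subalgebra.toSubmodule A).FG := by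
    rw [hAA']
    exact Submodule.fg_span (hSfin.insert 1)
  have hmodfin : Module.Finite R A := Module.Finite.iff_fg.mpr hfg
  refine ⟨⟨⟨A.toSubring, fun x => (O.mem_or_inv_mem x).imp (fun h => hOA h) fun h => hOA h⟩,
      rfl⟩, ?_, hmodfin⟩
  apply le_antisymm
  · intro x hx
    exact IsIntegral.of_mem_of_fg A hfg x hx
  · intro x hx
    have hint : IsIntegral R x := hx
    rcases O.mem_or_inv_mem x with h | h
    · exact hOA h
    · exact aux_mem_of_inv_mem A hint (hOA h)
end

section
/- Let K be a field and let R_1, R_2 be subrings of K, each integrally closed in K. If the index of the additive subgroup R_1 ∩ R_2 in R_1 is finite, then R_1 ⊆ R_2. -/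
theorem stmt7 {K : Type*} [Field K] (R₁ R₂ : Subring K)
    (h₁ : ∀ x : K, R₁.subtype.IsIntegralElem x → x ∈ R₁)
    (h₂ : ∀ x : K, R₂.subtype.IsIntegralElem x → x ∈ R₂)
    (hfin : Finite (R₁.toAddSubgroup ⧸
      ((R₁ ⊓ R₂).toAddSubgroup.addSubgroupOf R₁.toAddSubgroup))) :
    R₁ ≤ R₂ := by
  set S : Subring K := R₁ ⊓ R₂ with hS
  set H := (S.toAddSubgroup.addSubgroupOf R₁.toAddSubgroup)
  set Q := R₁.toAddSubgroup ⧸ H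
  -- the S-submodule of K with carrier R₁
  let f : Q → K := fun q => ((Quotient.out q : R₁.toAddSubgroup) : K)
  let T : Set K := Set.range f ∪ {1}
  have hTfin : T.Finite := ((Set.finite_range f).union (Set.finite_singleton 1))
  let N : Submodule S K := Submodule.span S T
  have h1N : (1 : K) ∈ N := Submodule.subset_span (Or.inr rfl)
  have hmem : ∀ x : K, x ∈ R₁ → x ∈ N := by
    intro x hx
    let x' : R₁.toAddSubgroup := ⟨x, hx⟩
    let q : Q := QuotientAddGroup.mk x'
    have hout : QuotientAddGroup.mk (Quotient.out q) = q := QuotientAddGroup.out_eq' q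
    have hdiff : -(Quotient.out q) + x' ∈ H := by
      have := (QuotientAddGroup.eq (s := H) (a := Quotient.out q) (b := x')).mp hout
      exact this
    have hdiffS : x - f q ∈ S := by
      have : ((-(Quotient.out q) + x' : R₁.toAddSubgroup) : K) ∈ S := hdiff
      simpa [f, x', sub_eq_neg_add] using this
    have : x = (⟨x - f q, hdiffS⟩ : S) • (1 : K) + f q := by
      simp [Subring.smul_def]
    rw [this]
    exact N.add_mem (N.smul_mem _ h1N) (Submodule.subset_span (Or.inl ⟨q, rfl⟩))
  intro x hx
  have hNne : N ≠ ⊥ := by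
    intro h
    have := h ▸ h1N
    simpa using this
  have hNfg : N.FG := ⟨hTfin.toFinset, by simp [N]⟩
  have hint : IsIntegral S x := by
    refine isIntegral_of_smul_mem_submodule N hNne hNfg x ?_
    intro n hn
    -- n ∈ N → n ∈ R₁?  Need span S T ≤ R₁ as sets
    have hNle : ∀ y ∈ N, y ∈ R₁ := by
      intro y hy
      refine Submodule.span_induction ?_ ?_ ?_ ?_ hy
      · rintro z (⟨q, rfl⟩ | hz)
        · exact (Quotient.out q).2
        · simp at hz; rw [hz]; exact R₁.one_mem
      · exact R₁.zero_mem
      · intro a b _ _ ha hb; exact R₁.add_mem ha hb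
      · intro c a _ ha
        exact R₁.mul_mem c.2.1 ha
    exact hmem _ (R₁.mul_mem hx (hNle n hn))
  obtain ⟨p, hpm, hpe⟩ := hint
  refine h₂ x ⟨p.map (Subring.inclusion (inf_le_right : R₁ ⊓ R₂ ≤ R₂)), hpm.map _, ?_⟩
  rw [Polynomial.eval₂_map]
  have : R₂.subtype.comp (Subring.inclusion (inf_le_right : R₁ ⊓ R₂ ≤ R₂)) =
      algebraMap S K := by ext y; rfl
  rw [this]
  exact hpe
end

section
/- Let R be an integral domain whose prime ideals are linearly ordered by inclusion, and let p ⊊ q be prime ideals of R. Then the following are equivalent: (1) p is an immediate predecessor of q, i.e., there is no prime ideal r with p ⊊ r ⊊ q; (2) for every a ∈ q \ p, one has q = √⟨a⟩ and p is the largest prime ideal not containing a (that is, a ∉ p and every prime ideal of R not containing a is contained in p). -/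
theorem stmt8 {R : Type*} [CommRing R] [IsDomain R]
    (h : ∀ p q : Ideal R, p.IsPrime → q.IsPrime → p ≤ q ∨ q ≤ p)
    (p q : Ideal R) (hp : p.IsPrime) (hq : q.IsPrime) (hpq : p < q) :
    (¬ ∃ r : Ideal R, r.IsPrime ∧ p < r ∧ r < q) ↔
      ∀ a ∈ q, a ∉ p →
        q = (Ideal.span {a}).radical ∧ a ∉ p ∧
          ∀ Q : Ideal R, Q.IsPrime → a ∉ Q → Q ≤ p := by
  constructor
  · intro hno a haq hap
    refine ⟨le_antisymm ?_ (hq.radical_le_iff.mpr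
      (Ideal.span_le.mpr (Set.singleton_subset_iff.mpr haq))), hap, ?_⟩
    · rw [Ideal.radical_eq_sInf]
      apply le_sInf
      rintro r ⟨har, hr⟩
      have har' : a ∈ r := har (Ideal.mem_span_singleton_self a)
      rcases h p r hp hr with hpr | hrp
      · rcases h r q hr hq with hrq | hqr
        · rcases eq_or_lt_of_le hrq with rfl | hlt
          · exact le_refl _
          · exact absurd ⟨r, hr, lt_of_le_of_ne hpr
              (fun e => hap (e ▸ har')), hlt⟩ hno
        · exact hqr
      · exact absurd (hrp har') hap
    · intro Q hQ haQ
      rcases h Q p hQ hp with hQp | hpQ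
      · exact hQp
      · rcases eq_or_lt_of_le hpQ with rfl | hlt
        · exact le_refl _
        · rcases h Q q hQ hq with hQq | hqQ
          · rcases eq_or_lt_of_le hQq with rfl | hlt2
            · exact absurd haq haQ
            · exact absurd ⟨Q, hQ, hlt, hlt2⟩ hno
          · exact absurd (hqQ haq) haQ
  · rintro H ⟨r, hr, hpr, hrq⟩
    obtain ⟨a, har, hap⟩ := SetLike.exists_of_lt hpr
    obtain ⟨hqrad, -, -⟩ := H a (hrq.le har) hap
    have hle : q ≤ r := hqrad ▸ hr.radical_le_iff.mpr
      (Ideal.span_le.mpr (Set.singleton_subset_iff.mpr har))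
    exact absurd (lt_of_lt_of_le hrq hle) (lt_irrefl _)
end

section
/- Let R be an integral domain whose prime ideals are linearly ordered by inclusion, and let a ∈ R be a nonzero non-unit. Then there exists a prime ideal P of R such that a ∉ P, every prime ideal of R not containing a is contained in P, and for every b ∈ R one has b ∉ P if and only if a^n ∈ ⟨b⟩ for some n ∈ ℕ. -/
theorem stmt9 {R : Type*} [CommRing R] [IsDomain R]
    (h : ∀ p q : Ideal R, p.IsPrime → q.IsPrime → p ≤ q ∨ q ≤ p)
    (a : R) (ha : a ≠ 0) (hu : ¬IsUnit a) :
    ∃ P : Ideal R, P.IsPrime ∧ a ∉ P ∧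
      (∀ Q : Ideal R, Q.IsPrime → a ∉ Q → Q ≤ P) ∧
      ∀ b : R, b ∉ P ↔ ∃ n : ℕ, a ^ n ∈ Ideal.span {b} := by
  set S : Set (Ideal R) := {Q | Q.IsPrime ∧ a ∉ Q} with hS
  have hne : S.Nonempty := ⟨⊥, Ideal.bot_prime, by simp [ha]⟩
  have hdir : DirectedOn (· ≤ ·) S := fun p hp q hq => by
    rcases h p q hp.1 hq.1 with h' | h'
    · exact ⟨q, hq, h', le_rfl⟩
    · exact ⟨p, hp, le_rfl, h'⟩
  set P : Ideal R := sSup S with hPdef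
  have hmem : ∀ x : R, x ∈ P ↔ ∃ Q ∈ S, x ∈ Q := fun x =>
    Submodule.mem_sSup_of_directed hne hdir
  have haP : a ∉ P := by
    rw [hmem]
    rintro ⟨Q, ⟨hQp, hQa⟩, hx⟩
    exact hQa hx
  have hPrime : P.IsPrime := by
    constructor
    · intro htop
      exact haP (htop ▸ Submodule.mem_top)
    · intro x y hxy
      rw [hmem] at hxy
      obtain ⟨Q, hQ, hxyQ⟩ := hxy
      rcases hQ.1.mem_or_mem hxyQ with hx | hy
      · exact Or.inl ((hmem x).mpr ⟨Q, hQ, hx⟩)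
      · exact Or.inr ((hmem y).mpr ⟨Q, hQ, hy⟩)
  refine ⟨P, hPrime, haP, fun Q hQp hQa => le_sSup ⟨hQp, hQa⟩, fun b => ?_⟩
  constructor
  · intro hb
    by_contra hn
    push_neg at hn
    have hdisj : Disjoint (Ideal.span {b} : Set R) (Submonoid.powers a : Set R) := by
      rw [Set.disjoint_left]
      rintro x hx ⟨n, rfl⟩
      exact hn n hx
    obtain ⟨p, hp, hle, hdis⟩ := Ideal.exists_le_prime_disjoint (Ideal.span {b}) _ hdisj
    have hap : a ∉ p := fun hap =>
      Set.disjoint_left.mp hdis hap ⟨1, pow_one a⟩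
    exact hb ((hmem b).mpr ⟨p, ⟨hp, hap⟩, hle (Ideal.subset_span rfl)⟩)
  · rintro ⟨n, hn⟩ hbP
    rw [hmem] at hbP
    obtain ⟨Q, ⟨hQp, hQa⟩, hbQ⟩ := hbP
    have : a ^ n ∈ Q := (Ideal.span_singleton_le_iff_mem Q).mpr hbQ hn
    exact hQa (hQp.mem_of_pow_mem n this)
end

section
/- An integral domain R is divided if and only if for all a, b ∈ R, either a ∈ ⟨b⟩ or b^n ∈ ⟨a⟩ for some n ∈ ℕ. -/
theorem stmt11 {R : Type*} [CommRing R] [IsDomain R] :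
    (∀ p : Ideal R, p.IsPrime → ∀ a : R, p ≤ Ideal.span {a} ∨ a ∈ p) ↔
      ∀ a b : R, a ∈ Ideal.span {b} ∨ ∃ n : ℕ, b ^ n ∈ Ideal.span {a} := by
  constructor
  · intro h a b
    by_cases hb : b ∈ (Ideal.span {a} : Ideal R).radical
    · right
      exact hb
    · left
      rw [Ideal.radical_eq_sInf, Ideal.mem_sInf] at hb
      push_neg at hb
      obtain ⟨p, ⟨hle, hp⟩, hbp⟩ := hb
      rcases h p hp b with h1 | h2
      · exact h1 (hle (Ideal.mem_span_singleton_self a))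
      · exact absurd h2 hbp
  · intro h p hp a
    by_cases ha : a ∈ p
    · right; exact ha
    · left
      intro x hx
      rcases h x a with h1 | ⟨n, h2⟩
      · exact h1
      · exfalso
        apply ha
        have : a ^ n ∈ p := (Ideal.span_singleton_le_iff_mem p).mpr hx h2
        rcases n with _ | n
        · simp at this
          exact (hp.ne_top (p.eq_top_iff_one.mpr this)).elim
        · exact hp.mem_of_pow_mem _ this
end

section
/- Let R be a nontrivial integral domain whose prime ideals are linearly ordered by inclusion, with (unique) maximal ideal M. For a nonzero a ∈ M let P_a denote the largest prime ideal of R not containing a (the union of the chain of prime ideals not containing a). Then the following are equivalent: (1) the set {P_a : a ∈ M, a ≠ 0} is densely ordered by strict inclusion, i.e., whenever P_a ⊊ P_b are two members of this set, there is a member P_c with P_a ⊊ P_c ⊊ P_b; (2) there are no three consecutive prime ideals in Spec(R), i.e., there do not exist primes p ⊊ q ⊊ r such that no prime lies strictly between p and q and no prime lies strictly between q and r; (3) for all nonzero a, b ∈ M, P_a ≠ √⟨b⟩. -/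
open IsLocalRing

/-- The radical of a principal ideal generated by a non-unit is prime, when
primes are linearly ordered. -/
lemma aux_rad_prime {R : Type*} [CommRing R] [IsLocalRing R]
    (h : ∀ p q : Ideal R, p.IsPrime → q.IsPrime → p ≤ q ∨ q ≤ p)
    {a : R} (haM : a ∈ maximalIdeal R) :
    (Ideal.span {a}).radical.IsPrime := by
  rw [Ideal.radical_eq_sInf]
  have hMT : maximalIdeal R ∈ {J : Ideal R | Ideal.span {a} ≤ J ∧ J.IsPrime} :=
    ⟨by rwa [Ideal.span_le, Set.singleton_subset_iff],
      (maximalIdeal.isMaximal R).isPrime⟩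
  constructor
  · intro htop
    have := sInf_le hMT
    rw [htop] at this
    exact (maximalIdeal.isMaximal R).ne_top (top_le_iff.mp this)
  · intro x y hxy
    by_contra hcon
    push_neg at hcon
    obtain ⟨hx, hy⟩ := hcon
    simp only [Ideal.mem_sInf] at hx hy hxy
    push_neg at hx hy
    obtain ⟨p, hpT, hxp⟩ := hx
    obtain ⟨q, hqT, hyq⟩ := hy
    rcases h p q hpT.2 hqT.2 with hpq | hqp
    · rcases hpT.2.mem_or_mem (hxy hpT) with h1 | h1
      · exact hxp h1
      · exact hyq (hpq h1)
    · rcases hqT.2.mem_or_mem (hxy hqT) with h1 | h1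
      · exact hxp (hqp h1)
      · exact hyq h1

/-- For nonzero `a` in the maximal ideal, `P a < √⟨a⟩` and every prime is below
`P a` or above `√⟨a⟩` (so they are consecutive primes). -/
lemma aux_jump {R : Type*} [CommRing R] [IsLocalRing R]
    (h : ∀ p q : Ideal R, p.IsPrime → q.IsPrime → p ≤ q ∨ q ≤ p)
    (P : R → Ideal R)
    (hP : ∀ a : R, a ≠ 0 → (P a).IsPrime ∧ a ∉ P a ∧
      ∀ Q : Ideal R, Q.IsPrime → a ∉ Q → Q ≤ P a)
    {a : R} (ha0 : a ≠ 0) (haM : a ∈ maximalIdeal R) :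
    P a < (Ideal.span {a}).radical ∧
    ∀ t : Ideal R, t.IsPrime → t ≤ P a ∨ (Ideal.span {a}).radical ≤ t := by
  obtain ⟨hPp, haP, hPmax⟩ := hP a ha0
  have hrad : (Ideal.span {a}).radical.IsPrime := aux_rad_prime h haM
  have haRad : a ∈ (Ideal.span {a}).radical :=
    Ideal.le_radical (Ideal.mem_span_singleton_self a)
  have key : ∀ t : Ideal R, t.IsPrime → t ≤ P a ∨ (Ideal.span {a}).radical ≤ t := by
    intro t ht
    by_cases hat : a ∈ t
    · right
      rw [ht.radical_le_iff]
      rwa [Ideal.span_le, Set.singleton_subset_iff]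
    · left; exact hPmax t ht hat
  refine ⟨?_, key⟩
  rcases h _ _ hPp hrad with h1 | h1
  · exact lt_of_le_of_ne h1 (fun he => haP (he ▸ haRad))
  · exact absurd (h1 haRad) haP

/-- Recover `P b` and `√⟨b⟩` from a pair of consecutive primes. -/
lemma aux_recover {R : Type*} [CommRing R] [IsLocalRing R]
    (h : ∀ p q : Ideal R, p.IsPrime → q.IsPrime → p ≤ q ∨ q ≤ p)
    (P : R → Ideal R)
    (hP : ∀ a : R, a ≠ 0 → (P a).IsPrime ∧ a ∉ P a ∧
      ∀ Q : Ideal R, Q.IsPrime → a ∉ Q → Q ≤ P a)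
    {p q : Ideal R} (hp : p.IsPrime) (hq : q.IsPrime) (hpq : p < q)
    (hno : ¬ ∃ s : Ideal R, s.IsPrime ∧ p < s ∧ s < q)
    {b : R} (hbq : b ∈ q) (hbp : b ∉ p) :
    b ≠ 0 ∧ b ∈ maximalIdeal R ∧ P b = p ∧ (Ideal.span {b}).radical = q := by
  have hb0 : b ≠ 0 := fun hb => hbp (hb ▸ p.zero_mem)
  have hqM : q ≤ maximalIdeal R := le_maximalIdeal hq.ne_top
  have hbM : b ∈ maximalIdeal R := hqM hbq
  obtain ⟨hPp, hbP, hPmax⟩ := hP b hb0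
  obtain ⟨hjump, hkey⟩ := aux_jump h P hP hb0 hbM
  have hrad : (Ideal.span {b}).radical.IsPrime := aux_rad_prime h hbM
  -- P b = p
  have hpPb : p ≤ P b := hPmax p hp hbp
  have hPbq : P b < q := by
    rcases h _ _ hPp hq with h1 | h1
    · exact lt_of_le_of_ne h1 (fun he => hbP (he ▸ hbq))
    · exact absurd (h1 hbq) hbP
  have hPb : P b = p := by
    by_contra hne
    exact hno ⟨P b, hPp, lt_of_le_of_ne hpPb (Ne.symm hne), hPbq⟩
  -- radical = q
  have hbRad : b ∈ (Ideal.span {b}).radical :=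
    Ideal.le_radical (Ideal.mem_span_singleton_self b)
  have hradq : (Ideal.span {b}).radical ≤ q := by
    rw [hq.radical_le_iff]
    rwa [Ideal.span_le, Set.singleton_subset_iff]
  have hprad : p < (Ideal.span {b}).radical := hPb ▸ hjump
  have hradEq : (Ideal.span {b}).radical = q := by
    by_contra hne
    exact hno ⟨_, hrad, hprad, lt_of_le_of_ne hradq hne⟩
  exact ⟨hb0, hbM, hPb, hradEq⟩

open IsLocalRing in
theorem stmt12 {R : Type*} [CommRing R] [IsDomain R] [IsLocalRing R]
    (h : ∀ p q : Ideal R, p.IsPrime → q.IsPrime → p ≤ q ∨ q ≤ p)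
    (P : R → Ideal R)
    (hP : ∀ a : R, a ≠ 0 → (P a).IsPrime ∧ a ∉ P a ∧
      ∀ Q : Ideal R, Q.IsPrime → a ∉ Q → Q ≤ P a) :
    ((∀ a b : R, a ∈ maximalIdeal R → b ∈ maximalIdeal R → a ≠ 0 → b ≠ 0 →
        P a < P b →
        ∃ c : R, c ∈ maximalIdeal R ∧ c ≠ 0 ∧ P a < P c ∧ P c < P b) ↔
      ¬ ∃ p q r : Ideal R, p.IsPrime ∧ q.IsPrime ∧ r.IsPrime ∧ p < q ∧ q < r ∧
        (¬ ∃ s : Ideal R, s.IsPrime ∧ p < s ∧ s < q) ∧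
        (¬ ∃ s : Ideal R, s.IsPrime ∧ q < s ∧ s < r)) ∧
    ((¬ ∃ p q r : Ideal R, p.IsPrime ∧ q.IsPrime ∧ r.IsPrime ∧ p < q ∧ q < r ∧
        (¬ ∃ s : Ideal R, s.IsPrime ∧ p < s ∧ s < q) ∧
        (¬ ∃ s : Ideal R, s.IsPrime ∧ q < s ∧ s < r)) ↔
      ∀ a b : R, a ∈ maximalIdeal R → b ∈ maximalIdeal R → a ≠ 0 → b ≠ 0 →
        P a ≠ (Ideal.span {b}).radical) := by
  constructor
  · constructor
    · -- density → no three consecutive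
      rintro hdense ⟨p, q, r, hp, hq, hr, hpq, hqr, hnpq, hnqr⟩
      obtain ⟨b, hbq, hbp⟩ := SetLike.exists_of_lt hpq
      obtain ⟨a, har, haq⟩ := SetLike.exists_of_lt hqr
      obtain ⟨hb0, hbM, hPb, _⟩ := aux_recover h P hP hp hq hpq hnpq hbq hbp
      obtain ⟨ha0, haM, hPa, _⟩ := aux_recover h P hP hq hr hqr hnqr har haq
      obtain ⟨c, hcM, hc0, h1, h2⟩ := hdense b a hbM haM hb0 ha0
        (by rw [hPb, hPa]; exact hpq)
      rw [hPb] at h1; rw [hPa] at h2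
      exact hnpq ⟨P c, (hP c hc0).1, h1, h2⟩
    · -- no three consecutive → density
      intro G a b haM hbM ha0 hb0 hab
      obtain ⟨hPaP, haPa, _⟩ := hP a ha0
      obtain ⟨hPbP, hbPb, _⟩ := hP b hb0
      set S := (Ideal.span {a}).radical with hS
      have hSp : S.IsPrime := aux_rad_prime h haM
      obtain ⟨hjumpA, hkeyA⟩ := aux_jump h P hP ha0 haM
      -- S ≤ P b
      have hSPb : S ≤ P b := by
        rcases hkeyA (P b) hPbP with h1 | h1
        · exact absurd (lt_of_lt_of_le hab h1) (lt_irrefl _)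
        · exact h1
      -- S ≠ P b, otherwise P a < P b < √⟨b⟩ are three consecutive primes
      have hSne : S ≠ P b := by
        intro hSeq
        obtain ⟨hjumpB, hkeyB⟩ := aux_jump h P hP hb0 hbM
        have hradBp : (Ideal.span {b}).radical.IsPrime := aux_rad_prime h hbM
        refine G ⟨P a, P b, (Ideal.span {b}).radical, hPaP, hPbP, hradBp, hab,
          hjumpB, ?_, ?_⟩
        · rintro ⟨s, hs, h1, h2⟩
          rcases hkeyA s hs with h3 | h3
          · exact absurd (lt_of_lt_of_le h1 h3) (lt_irrefl _)
          · have h4 : P b ≤ s := hSeq ▸ h3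
            exact absurd (lt_of_lt_of_le h2 h4) (lt_irrefl _)
        · rintro ⟨s, hs, h1, h2⟩
          rcases hkeyB s hs with h3 | h3
          · exact absurd (lt_of_lt_of_le h1 h3) (lt_irrefl _)
          · exact absurd (lt_of_lt_of_le h2 h3) (lt_irrefl _)
      have hSlt : S < P b := lt_of_le_of_ne hSPb hSne
      obtain ⟨c, hcPb, hcS⟩ := SetLike.exists_of_lt hSlt
      have hc0 : c ≠ 0 := fun hc => hcS (hc ▸ S.zero_mem)
      have hcM : c ∈ maximalIdeal R := le_maximalIdeal hPbP.ne_top hcPb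
      obtain ⟨hPcP, hcPc, hPcmax⟩ := hP c hc0
      have hSPc : S ≤ P c := hPcmax S hSp hcS
      have hPcPb : P c < P b := by
        rcases h _ _ hPcP hPbP with h1 | h1
        · exact lt_of_le_of_ne h1 (fun he => hcPc (he ▸ hcPb))
        · exact absurd (h1 hcPb) hcPc
      exact ⟨c, hcM, hc0, lt_of_lt_of_le hjumpA hSPc, hPcPb⟩
  · constructor
    · -- no three consecutive → P a ≠ √⟨b⟩
      intro G a b haM hbM ha0 hb0 heq
      obtain ⟨hPaP, _, _⟩ := hP a ha0
      obtain ⟨hPbP, _, _⟩ := hP b hb0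
      obtain ⟨hjumpA, hkeyA⟩ := aux_jump h P hP ha0 haM
      obtain ⟨hjumpB, hkeyB⟩ := aux_jump h P hP hb0 hbM
      have hradAp : (Ideal.span {a}).radical.IsPrime := aux_rad_prime h haM
      refine G ⟨P b, P a, (Ideal.span {a}).radical, hPbP, hPaP, hradAp,
        heq ▸ hjumpB, hjumpA, ?_, ?_⟩
      · rintro ⟨s, hs, h1, h2⟩
        rcases hkeyB s hs with h3 | h3
        · exact absurd (lt_of_lt_of_le h1 h3) (lt_irrefl _)
        · rw [← heq] at h3
          exact absurd (lt_of_lt_of_le h2 h3) (lt_irrefl _)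
      · rintro ⟨s, hs, h1, h2⟩
        rcases hkeyA s hs with h3 | h3
        · exact absurd (lt_of_lt_of_le h1 h3) (lt_irrefl _)
        · exact absurd (lt_of_lt_of_le h2 h3) (lt_irrefl _)
    · -- P a ≠ √⟨b⟩ → no three consecutive
      rintro H ⟨p, q, r, hp, hq, hr, hpq, hqr, hnpq, hnqr⟩
      obtain ⟨b, hbq, hbp⟩ := SetLike.exists_of_lt hpq
      obtain ⟨a, har, haq⟩ := SetLike.exists_of_lt hqr
      obtain ⟨hb0, hbM, _, hradB⟩ := aux_recover h P hP hp hq hpq hnpq hbq hbp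
      obtain ⟨ha0, haM, hPa, _⟩ := aux_recover h P hP hq hr hqr hnqr har haq
      exact H a b haM hbM ha0 hb0 (by rw [hPa, hradB])
end

section
/- Let R be a divided integral domain and let a ∈ R be a nonzero non-unit. Then ⋂_{n ≥ 1} ⟨a^n⟩ is a prime ideal of R not containing a, and every prime ideal of R not containing a is contained in ⋂_{n ≥ 1} ⟨a^n⟩; that is, ⋂_{n ≥ 1} ⟨a^n⟩ is the largest prime ideal of R not containing a. -/
theorem stmt13 {R : Type*} [CommRing R] [IsDomain R]
    (hdiv : ∀ p : Ideal R, p.IsPrime → ∀ x : R, p ≤ Ideal.span {x} ∨ x ∈ p)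
    (a : R) (ha : a ≠ 0) (hu : ¬IsUnit a) :
    (⨅ n : ℕ, Ideal.span {a ^ (n + 1)}).IsPrime ∧
      a ∉ (⨅ n : ℕ, Ideal.span {a ^ (n + 1)}) ∧
      ∀ p : Ideal R, p.IsPrime → a ∉ p → p ≤ ⨅ n : ℕ, Ideal.span {a ^ (n + 1)} := by
  set P := ⨅ n : ℕ, Ideal.span {a ^ (n + 1)} with hP
  -- every prime not containing a is contained in P
  have hle : ∀ p : Ideal R, p.IsPrime → a ∉ p → p ≤ P := by
    intro p hp hap
    refine le_iInf fun n => ?_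
    induction n with
    | zero =>
      simpa using (hdiv p hp a).resolve_right hap
    | succ n ih =>
      intro y hy
      obtain ⟨z, hz⟩ := Ideal.mem_span_singleton'.mp (ih hy)
      have hpow : a ^ (n + 1) ∉ p := fun h => hap (hp.mem_of_pow_mem _ h)
      have hzp : z ∈ p := by
        rcases hp.mem_or_mem (show z * a ^ (n + 1) ∈ p from hz ▸ hy) with h | h
        · exact h
        · exact absurd h hpow
      obtain ⟨w, hw⟩ :=
        Ideal.mem_span_singleton'.mp (((hdiv p hp a).resolve_right hap) hzp)
      exact Ideal.mem_span_singleton'.mpr ⟨w, by rw [← hz, ← hw]; ring⟩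
  -- a ∉ P
  have hanotP : a ∉ P := by
    intro h
    obtain ⟨c, hc⟩ := Ideal.mem_span_singleton.mp (Ideal.mem_iInf.mp h 1)
    apply hu
    refine IsUnit.of_mul_eq_one (a := a) c (mul_left_cancel₀ ha ?_)
    rw [mul_one]; conv_rhs => rw [hc]
    ring
  -- P is disjoint from the powers of a
  have hdisj : Disjoint (P : Set R) (Submonoid.powers a) := by
    rw [Set.disjoint_left]
    rintro x hx ⟨n, rfl⟩
    obtain ⟨c, hc⟩ := Ideal.mem_span_singleton.mp (Ideal.mem_iInf.mp hx n)
    apply hu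
    have hc' : a ^ n = a ^ (n + 1) * c := hc
    refine IsUnit.of_mul_eq_one (a := a) c (mul_left_cancel₀ (pow_ne_zero n ha) ?_)
    rw [mul_one]; conv_rhs => rw [hc']
    ring
  obtain ⟨q, hq, hPq, hqdisj⟩ := Ideal.exists_le_prime_disjoint P _ hdisj
  have haq : a ∉ q := fun h =>
    Set.disjoint_left.mp hqdisj h (Submonoid.mem_powers a)
  have hPeq : P = q := le_antisymm hPq (hle q hq haq)
  exact ⟨hPeq ▸ hq, hanotP, hle⟩
end

section
/- Let R be a local divided integral domain with maximal ideal M. Then R is fragmented (i.e., for every non-unit a ∈ R there exists a non-unit b ∈ R with a ∈ ⟨b^n⟩ for all n ≥ 1) if and only if M has no immediate prime predecessor (i.e., for every prime ideal p ⊊ M there exists a prime ideal q with p ⊊ q ⊊ M). -/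
open IsLocalRing in
theorem stmt14 {R : Type*} [CommRing R] [IsDomain R] [IsLocalRing R]
    (hdiv : ∀ p : Ideal R, p.IsPrime → ∀ x : R, p ≤ Ideal.span {x} ∨ x ∈ p) :
    (∀ a : R, ¬IsUnit a → ∃ b : R, ¬IsUnit b ∧
        ∀ n : ℕ, 1 ≤ n → a ∈ Ideal.span {b ^ n}) ↔
      ∀ p : Ideal R, p.IsPrime → p < maximalIdeal R →
        ∃ q : Ideal R, q.IsPrime ∧ p < q ∧ q < maximalIdeal R := by
  -- primes are comparable in a divided domain
  have hcomp : ∀ P Q : Ideal R, P.IsPrime → Q.IsPrime → P ≤ Q ∨ Q ≤ P := by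
    intro P Q hP hQ
    by_cases h : Q ≤ P
    · exact Or.inr h
    · obtain ⟨x, hxQ, hxP⟩ := SetLike.not_le_iff_exists.mp h
      rcases hdiv P hP x with h' | h'
      · exact Or.inl (h'.trans ((Ideal.span_singleton_le_iff_mem Q).mpr hxQ))
      · exact absurd h' hxP
  constructor
  · -- fragmented → no immediate predecessor
    intro hfrag p hp hpM
    obtain ⟨a, haM, hap⟩ := SetLike.exists_of_lt hpM
    have ha0 : a ≠ 0 := fun h => hap (h ▸ p.zero_mem)
    have haU : ¬IsUnit a := (mem_maximalIdeal a).mp haM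
    obtain ⟨b, hbU, hb⟩ := hfrag a haU
    set q := (Ideal.span {a}).radical with hq_def
    have haq : a ∈ q := Ideal.le_radical (Ideal.mem_span_singleton_self a)
    -- the radical of ⟨a⟩ is prime, since primes containing a form a chain
    have hqprime : q.IsPrime := by
      constructor
      · intro htop
        have h1 : Ideal.span {a} ≤ maximalIdeal R :=
          (Ideal.span_singleton_le_iff_mem _).mpr haM
        have h2 : q ≤ maximalIdeal R := by
          calc q ≤ (maximalIdeal R).radical := Ideal.radical_mono h1
            _ = maximalIdeal R := ((maximalIdeal.isMaximal R).isPrime).radical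
        exact (maximalIdeal.isMaximal R).ne_top (top_le_iff.mp (htop ▸ h2))
      · intro u v huv
        by_contra hcon
        push_neg at hcon
        obtain ⟨hu, hv⟩ := hcon
        rw [hq_def, Ideal.radical_eq_sInf] at hu hv huv
        simp only [Ideal.mem_sInf, not_forall] at hu hv
        obtain ⟨P, hPmem, hPu⟩ := hu
        obtain ⟨Q, hQmem, hQv⟩ := hv
        rcases hcomp P Q hPmem.2 hQmem.2 with hle | hle
        · have huvP : u * v ∈ P := Ideal.mem_sInf.mp huv hPmem
          rcases hPmem.2.mem_or_mem huvP with h | h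
          · exact hPu h
          · exact hQv (hle h)
        · have huvQ : u * v ∈ Q := Ideal.mem_sInf.mp huv hQmem
          rcases hQmem.2.mem_or_mem huvQ with h | h
          · exact hPu (hle h)
          · exact hQv h
    -- b ∉ q, via cancellation
    have hbq : b ∉ q := by
      intro hbmem
      obtain ⟨k, hk⟩ := Ideal.mem_radical_iff.mp hbmem
      obtain ⟨c, hc⟩ := Ideal.mem_span_singleton.mp hk
      obtain ⟨d, hd⟩ := Ideal.mem_span_singleton.mp (hb (k + 1) (Nat.le_add_left 1 k))
      have hb0 : b ≠ 0 := by
        rintro rfl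
        rw [zero_pow (Nat.succ_ne_zero k)] at hd
        exact ha0 (by rw [hd, zero_mul])
      have : b ^ k * 1 = b ^ k * (b * (d * c)) := by
        calc b ^ k * 1 = a * c := by rw [mul_one, hc]
          _ = b ^ (k + 1) * d * c := by rw [hd]
          _ = b ^ k * (b * (d * c)) := by ring
      have h1 : (1 : R) = b * (d * c) := mul_left_cancel₀ (pow_ne_zero k hb0) this
      exact hbU (IsUnit.of_mul_eq_one (d * c) h1.symm)
    refine ⟨q, hqprime, ?_, ?_⟩
    · have hpq : p ≤ q := by
        rcases hdiv p hp a with h | h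
        · exact h.trans Ideal.le_radical
        · exact absurd h hap
      exact lt_of_le_of_ne hpq (fun h => hap (h ▸ haq))
    · have hqM : q ≤ maximalIdeal R := by
        calc q ≤ (maximalIdeal R).radical :=
              Ideal.radical_mono ((Ideal.span_singleton_le_iff_mem _).mpr haM)
          _ = maximalIdeal R := ((maximalIdeal.isMaximal R).isPrime).radical
      refine lt_of_le_of_ne hqM (fun h => hbq ?_)
      rw [h, mem_maximalIdeal]
      exact hbU
  · -- no immediate predecessor → fragmented
    intro hsucc a haU
    by_cases ha0 : a = 0
    · refine ⟨0, not_isUnit_zero, fun n _ => ?_⟩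
      rw [ha0]; exact Ideal.zero_mem _
    -- the union of all primes not containing a
    set S : Set (Ideal R) := {p' | p'.IsPrime ∧ a ∉ p'} with hS_def
    have hSne : S.Nonempty := ⟨⊥, Ideal.bot_prime, by simpa using ha0⟩
    have hdir : DirectedOn (· ≤ ·) S := by
      intro P hP Q hQ
      rcases hcomp P Q hP.1 hQ.1 with h | h
      · exact ⟨Q, hQ, h, le_rfl⟩
      · exact ⟨P, hP, le_rfl, h⟩
    set p := sSup S with hp_def
    have hmem : ∀ x : R, x ∈ p ↔ ∃ p' ∈ S, x ∈ p' := fun x =>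
      Submodule.mem_sSup_of_directed hSne hdir
    have hap : a ∉ p := by
      intro h
      obtain ⟨p', hp', hap'⟩ := (hmem a).mp h
      exact hp'.2 hap'
    have hpprime : p.IsPrime := by
      constructor
      · intro htop
        have : (1 : R) ∈ p := htop ▸ Submodule.mem_top
        obtain ⟨p', hp', h1⟩ := (hmem 1).mp this
        exact hp'.1.ne_top (Ideal.eq_top_of_isUnit_mem _ h1 isUnit_one)
      · intro u v huv
        obtain ⟨p', hp', huv'⟩ := (hmem (u * v)).mp huv
        rcases hp'.1.mem_or_mem huv' with h | h
        · exact Or.inl ((hmem u).mpr ⟨p', hp', h⟩)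
        · exact Or.inr ((hmem v).mpr ⟨p', hp', h⟩)
    have haM : a ∈ maximalIdeal R := (mem_maximalIdeal a).mpr haU
    have hpM : p < maximalIdeal R :=
      lt_of_le_of_ne (le_maximalIdeal hpprime.ne_top) (fun h => hap (h ▸ haM))
    obtain ⟨q, hq, hpq, hqM⟩ := hsucc p hpprime hpM
    have haq : a ∈ q := by
      by_contra h
      exact absurd (le_sSup (show q ∈ S from ⟨hq, h⟩)) (not_le_of_gt hpq)
    obtain ⟨b, hbM, hbq⟩ := SetLike.exists_of_lt hqM
    refine ⟨b, (mem_maximalIdeal b).mp hbM, fun n _ => ?_⟩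
    have hbn : b ^ n ∉ q := fun h => hbq (hq.mem_of_pow_mem n h)
    rcases hdiv q hq (b ^ n) with h | h
    · exact h haq
    · exact absurd h hbn
end

section
/- Let R be an infinite integral domain and let X ⊆ R be a finite subset. Then there exists a nonzero a ∈ R such that a(X − X) ∩ (X − X) ⊆ {0}; that is, whenever x, y, x', y' ∈ X satisfy a(x − y) = x' − y', one has x = y. -/
theorem stmt15 {R : Type*} [CommRing R] [IsDomain R] [Infinite R] (X : Finset R) :
    ∃ a : R, a ≠ 0 ∧ ∀ x ∈ X, ∀ y ∈ X, ∀ x' ∈ X, ∀ y' ∈ X,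
      a * (x - y) = x' - y' → x = y := by
  classical
  set D : Finset R := (X ×ˢ X).image (fun p => p.1 - p.2) with hD
  have hBad : (⋃ d ∈ (D : Set R), ⋃ e ∈ (D : Set R),
      {a : R | d ≠ 0 ∧ a * d = e}).Finite := by
    apply Set.Finite.biUnion D.finite_toSet
    intro d _
    apply Set.Finite.biUnion D.finite_toSet
    intro e _
    apply Set.Subsingleton.finite
    rintro a ⟨hd, ha⟩ b ⟨_, hb⟩
    exact mul_right_cancel₀ hd (ha.trans hb.symm)
  obtain ⟨a, -, ha⟩ := (Set.infinite_univ (α := R)).exists_notMem_finite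
    (hBad.union (Set.finite_singleton 0))
  refine ⟨a, ?_, ?_⟩
  · intro h; exact ha (Set.mem_union_right _ (by simp [h]))
  · intro x hx y hy x' hx' y' hy' heq
    by_contra hxy
    apply ha
    left
    refine Set.mem_biUnion (x := x - y) ?_ (Set.mem_biUnion (x := x' - y') ?_ ?_)
    · exact Finset.mem_coe.mpr (Finset.mem_image.mpr ⟨(x, y), Finset.mem_product.mpr ⟨hx, hy⟩, rfl⟩)
    · exact Finset.mem_coe.mpr (Finset.mem_image.mpr ⟨(x', y'), Finset.mem_product.mpr ⟨hx', hy'⟩, rfl⟩)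
    · exact ⟨sub_ne_zero.mpr hxy, heq⟩
end

section
/- Let R be an integral domain which is not a field, whose prime ideals are linearly ordered by inclusion, with (unique) maximal ideal M. If M has no immediate prime predecessor, then M is the union of the non-maximal prime ideals of R; that is, every b ∈ M lies in some prime ideal q with q ⊊ M. -/
open IsLocalRing in
theorem stmt17 {R : Type*} [CommRing R] [IsDomain R] [IsLocalRing R]
    (hnf : ¬IsField R)
    (h : ∀ p q : Ideal R, p.IsPrime → q.IsPrime → p ≤ q ∨ q ≤ p)
    (hnip : ∀ p : Ideal R, p.IsPrime → p < maximalIdeal R →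
      ∃ q : Ideal R, q.IsPrime ∧ p < q ∧ q < maximalIdeal R) :
    ∀ b ∈ maximalIdeal R, ∃ q : Ideal R, q.IsPrime ∧ q < maximalIdeal R ∧ b ∈ q := by
  intro b hb
  set S : Set (Ideal R) := {q | q.IsPrime ∧ q < maximalIdeal R} with hS
  have hbot : (⊥ : Ideal R) ∈ S := by
    refine ⟨Ideal.bot_prime, lt_of_le_of_ne bot_le ?_⟩
    intro h0
    exact hnf ((IsLocalRing.isField_iff_maximalIdeal_eq).mpr h0.symm)
  have hne : S.Nonempty := ⟨⊥, hbot⟩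
  have hdir : DirectedOn (· ≤ ·) S := fun p hp q hq => by
    rcases h p q hp.1 hq.1 with hle | hle
    · exact ⟨q, hq, hle, le_rfl⟩
    · exact ⟨p, hp, le_rfl, hle⟩
  set P : Ideal R := sSup S with hP
  have hmem : ∀ x : R, x ∈ P ↔ ∃ q ∈ S, x ∈ q := fun x =>
    Submodule.mem_sSup_of_directed hne hdir
  have hPle : P ≤ maximalIdeal R := sSup_le fun q hq => hq.2.le
  have hPprime : P.IsPrime := by
    constructor
    · intro hPtop
      have : (1 : R) ∈ P := hPtop ▸ Submodule.mem_top
      obtain ⟨q, hq, h1⟩ := (hmem 1).mp this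
      exact hq.1.ne_top ((Ideal.eq_top_iff_one q).mpr h1)
    · intro x y hxy
      obtain ⟨q, hq, hxyq⟩ := (hmem (x * y)).mp hxy
      rcases hq.1.mem_or_mem hxyq with hx | hy
      · exact Or.inl ((hmem x).mpr ⟨q, hq, hx⟩)
      · exact Or.inr ((hmem y).mpr ⟨q, hq, hy⟩)
  rcases eq_or_lt_of_le hPle with heq | hlt
  · -- P = maximalIdeal, so b ∈ some q ∈ S
    have : b ∈ P := heq ▸ hb
    obtain ⟨q, hq, hbq⟩ := (hmem b).mp this
    exact ⟨q, hq.1, hq.2, hbq⟩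
  · obtain ⟨q, hq, hPq, hqM⟩ := hnip P hPprime hlt
    have : q ≤ P := le_sSup ⟨hq, hqM⟩
    exact absurd (this.trans_lt hPq) (lt_irrefl _)
end

section
/- Let R be an integral domain whose prime ideals are linearly ordered by inclusion, with (unique) maximal ideal M. Then M has an immediate prime predecessor (i.e., there exists a prime p ⊊ M with no prime strictly between p and M) if and only if there exists a nonzero a ∈ M with √⟨a⟩ = M. -/
open IsLocalRing in
theorem stmt18 {R : Type*} [CommRing R] [IsDomain R] [IsLocalRing R]
    (h : ∀ p q : Ideal R, p.IsPrime → q.IsPrime → p ≤ q ∨ q ≤ p) :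
    (∃ p : Ideal R, p.IsPrime ∧ p < maximalIdeal R ∧
        ¬ ∃ q : Ideal R, q.IsPrime ∧ p < q ∧ q < maximalIdeal R) ↔
      ∃ a ∈ maximalIdeal R, a ≠ 0 ∧ (Ideal.span {a}).radical = maximalIdeal R := by
  constructor
  · rintro ⟨p, hp, hpM, hno⟩
    obtain ⟨a, haM, hap⟩ := SetLike.exists_of_lt hpM
    refine ⟨a, haM, fun h0 => hap (h0 ▸ p.zero_mem), ?_⟩
    rw [Ideal.radical_eq_sInf]
    apply le_antisymm
    · exact sInf_le ⟨(Ideal.span_singleton_le_iff_mem _).2 haM,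
        (maximalIdeal.isMaximal R).isPrime⟩
    · refine le_sInf fun q hq => ?_
      obtain ⟨hq1, hq2⟩ := hq
      have haq : a ∈ q := hq1 (Ideal.mem_span_singleton_self a)
      have hqM : q ≤ maximalIdeal R := le_maximalIdeal hq2.ne_top
      rcases h p q hp hq2 with hpq | hqp
      · rcases lt_or_eq_of_le hqM with hlt | heq
        · exact absurd ⟨q, hq2, lt_of_le_of_ne hpq (fun e => hap (e ▸ haq)), hlt⟩ hno
        · exact heq ▸ le_refl _
      · exact absurd (hqp haq) hap
  · rintro ⟨a, haM, ha0, hrad⟩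
    set S : Set (Ideal R) := {q | q.IsPrime ∧ a ∉ q} with hS
    have hbot : (⊥ : Ideal R) ∈ S := ⟨Ideal.bot_prime, by simpa using ha0⟩
    have hdir : DirectedOn (· ≤ ·) S := fun x hx y hy =>
      (h x y hx.1 hy.1).elim (fun hxy => ⟨y, hy, hxy, le_refl _⟩)
        (fun hyx => ⟨x, hx, le_refl _, hyx⟩)
    have hmem : ∀ x : R, x ∈ sSup S ↔ ∃ q ∈ S, x ∈ q := fun x =>
      Submodule.mem_sSup_of_directed ⟨⊥, hbot⟩ hdir
    have haP : a ∉ sSup S := by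
      rw [hmem]; rintro ⟨q, hq, haq⟩; exact hq.2 haq
    have hprime : (sSup S).IsPrime := by
      constructor
      · intro htop; exact haP (htop ▸ Submodule.mem_top)
      · intro x y hxy
        simp only [hmem] at hxy ⊢
        obtain ⟨q, hqS, hq⟩ := hxy
        rcases hqS.1.mem_or_mem hq with hx | hy
        · exact Or.inl ⟨q, hqS, hx⟩
        · exact Or.inr ⟨q, hqS, hy⟩
    have hPM : sSup S < maximalIdeal R :=
      lt_of_le_of_ne (le_maximalIdeal hprime.ne_top) (fun e => haP (e ▸ haM))
    refine ⟨sSup S, hprime, hPM, ?_⟩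
    rintro ⟨q, hq, hPq, hqM⟩
    have haq : a ∈ q := by
      by_contra hne
      exact absurd (le_sSup (show q ∈ S from ⟨hq, hne⟩)) hPq.not_ge
    have hMq : maximalIdeal R ≤ q := by
      rw [← hrad]
      exact hq.radical_le_iff.mpr ((Ideal.span_singleton_le_iff_mem _).2 haq)
    exact absurd hMq hqM.not_ge
end
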